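/- Let ψ : ℝ → ℝ be continuous with ψ(p) = 0 for p ≤ P₀, ψ(p) = 1 for p ≥ P₁ (with P₀ < P₁), and ψ continuously differentiable on (P₀,P₁) with ψ'(p) = 1/(η γ(p)) there, where η = ∫_{P₀}^{P₁} dp/γ(p) and γ is smooth and positive. Then for every C² compactly supported function v : ℝ → ℝ, ∫_ℝ v(p) (ν² ψ''(p) - (H'(p) - σ) ψ'(p)) dp interpreted distributionally equals α₋ v(P₀) - α₊ v(P₁), i.e. ∫_ℝ (ν² v''(p) + ((H'(p) - σ) v(p))' ) ψ(p) dp = α₋ v(P₀) - α₊ v(P₁), where α₋ = ν²/(η γ(P₀)), α₊ = ν²/(η γ(P₁)), and γ(p) = exp((-H(p)+σp)/ν²). -/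

import Mathlib

open MeasureTheory intervalIntegral Set Filter

theorem stmt_7 (H : ℝ → ℝ) (hH : ContDiff ℝ 2 H) (σ ν P₀ P₁ : ℝ)
    (hν : 0 < ν) (hP : P₀ < P₁)
    (γ : ℝ → ℝ) (hγ : ∀ p, γ p = Real.exp ((-H p + σ * p) / ν ^ 2))
    (η : ℝ) (hη : η = ∫ p in P₀..P₁, (γ p)⁻¹)
    (ψ : ℝ → ℝ)
    (hψ₀ : ∀ p, p ≤ P₀ → ψ p = 0)
    (hψ₁ : ∀ p, P₁ ≤ p → ψ p = 1)
    (hψmid : ∀ p, P₀ ≤ p → p ≤ P₁ → ψ p = η⁻¹ * ∫ q in P₀..p, (γ q)⁻¹)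
    (αm αp : ℝ) (hαm : αm = ν ^ 2 / (η * γ P₀)) (hαp : αp = ν ^ 2 / (η * γ P₁)) :
    ∀ v : ℝ → ℝ, ContDiff ℝ 2 v → HasCompactSupport v →
      (∫ p : ℝ, (ν ^ 2 * deriv (deriv v) p
          + deriv (fun q => (deriv H q - σ) * v q) p) * ψ p)
        = αm * v P₀ - αp * v P₁ := by
  intro v hv hvsupp
  have hν2 : (ν : ℝ) ^ 2 ≠ 0 := pow_ne_zero 2 hν.ne'
  -- basic facts about γ and δ = γ⁻¹
  set δ : ℝ → ℝ := fun p => (γ p)⁻¹ with hδdef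
  have hδ : ∀ p, δ p = Real.exp ((H p - σ * p) / ν ^ 2) := by
    intro p
    simp only [hδdef, hγ p, ← Real.exp_neg]
    congr 1
    ring
  have hγpos : ∀ p, 0 < γ p := fun p => (hγ p) ▸ Real.exp_pos _
  have hδpos : ∀ p, 0 < δ p := fun p => inv_pos.mpr (hγpos p)
  -- differentiability facts
  have hHd : Differentiable ℝ H := hH.differentiable two_ne_zero
  have hH2 : ContDiff ℝ (1 + 1) H := by norm_num; exact hH
  have hH' : ContDiff ℝ 1 (deriv H) := (contDiff_succ_iff_deriv.mp hH2).2.2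
  have hH'd : Differentiable ℝ (deriv H) := hH'.differentiable one_ne_zero
  have hv2 : ContDiff ℝ (1 + 1) v := by norm_num; exact hv
  have hv1 : Differentiable ℝ v := hv.differentiable two_ne_zero
  have hv' : ContDiff ℝ 1 (deriv v) := (contDiff_succ_iff_deriv.mp hv2).2.2
  have hv'd : Differentiable ℝ (deriv v) := hv'.differentiable one_ne_zero
  have hδd : ∀ p, HasDerivAt δ ((deriv H p - σ) / ν ^ 2 * δ p) p := by
    intro p
    have h1 : HasDerivAt (fun p => (H p - σ * p) / ν ^ 2) ((deriv H p - σ) / ν ^ 2) p := by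
      have hσ : HasDerivAt (fun p : ℝ => σ * p) σ p := by
        simpa using (hasDerivAt_id p).const_mul σ
      exact (((hHd p).hasDerivAt).sub hσ).div_const _
    have h2 := h1.exp
    have : δ = fun p => Real.exp ((H p - σ * p) / ν ^ 2) := funext hδ
    rw [this]
    simpa [mul_comm, hδ p] using h2
  have hδcont : Continuous δ := by
    rw [show δ = fun p => Real.exp ((H p - σ * p) / ν ^ 2) from funext hδ]
    exact Real.continuous_exp.comp (((hH.continuous.sub (continuous_const.mul continuous_id)).div_const _))
  have hδint : ∀ a b : ℝ, IntervalIntegrable δ volume a b :=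
    fun a b => hδcont.intervalIntegrable a b
  have hηpos : 0 < η := by
    rw [hη]
    exact intervalIntegral_pos_of_pos_on (hδint _ _) (fun x _ => hδpos x) hP
  -- the primitive Φ
  set Φ : ℝ → ℝ := fun p => η⁻¹ * ∫ q in P₀..p, δ q with hΦdef
  have hΦd : ∀ x, HasDerivAt Φ (η⁻¹ * δ x) x := by
    intro x
    exact (intervalIntegral.integral_hasDerivAt_right (hδint _ _)
      hδcont.aestronglyMeasurable.stronglyMeasurableAtFilter
      hδcont.continuousAt).const_mul η⁻¹
  have hΦcont : Continuous Φ :=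
    continuous_iff_continuousAt.mpr fun x => (hΦd x).continuousAt
  -- ψ as a composition, continuity of ψ
  have hψΦ : ψ = fun p => Φ (min (max p P₀) P₁) := by
    funext p
    rcases le_total p P₀ with h0 | h0
    · rw [hψ₀ p h0, max_eq_right h0, min_eq_left hP.le]
      simp [hΦdef]
    rcases le_total p P₁ with h1 | h1
    · rw [hψmid p h0 h1, max_eq_left h0, min_eq_left h1]
    · rw [hψ₁ p h1, max_eq_left h0, min_eq_right h1]
      simp only [hΦdef]
      rw [← hη, inv_mul_cancel₀ hηpos.ne']
  have hψcont : Continuous ψ := by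
    rw [hψΦ]
    exact hΦcont.comp ((continuous_id.max continuous_const).min continuous_const)
  -- the flux function F and its derivative
  set F : ℝ → ℝ := fun p => ν ^ 2 * deriv v p + (deriv H p - σ) * v p with hFdef
  set d₂ : ℝ → ℝ := fun p => deriv (deriv H) p * v p + (deriv H p - σ) * deriv v p with hd₂def
  have hprod : ∀ p, HasDerivAt (fun q => (deriv H q - σ) * v q) (d₂ p) p := by
    intro p
    exact ((hH'd p).hasDerivAt.sub_const σ).mul (hv1 p).hasDerivAt
  set F' : ℝ → ℝ := fun p => ν ^ 2 * deriv (deriv v) p + d₂ p with hF'def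
  have hF : ∀ p, HasDerivAt F (F' p) p := by
    intro p
    exact ((hv'd p).hasDerivAt.const_mul (ν ^ 2)).add (hprod p)
  have hFcont : Continuous F :=
    continuous_iff_continuousAt.mpr fun x => (hF x).continuousAt
  have hF'cont : Continuous F' := by
    apply Continuous.add
    · exact continuous_const.mul (hv'.continuous_deriv le_rfl)
    · exact ((hH'.continuous_deriv le_rfl).mul hv1.continuous).add
        ((hH'd.continuous.sub continuous_const).mul hv'd.continuous)
  have hFsupp : HasCompactSupport F := by
    apply HasCompactSupport.add
    · exact (hvsupp.deriv).mul_left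
    · exact hvsupp.mul_left
  have hF'supp : HasCompactSupport F' := by
    have : F' = deriv F := funext fun p => ((hF p).deriv).symm
    rw [this]
    exact hFsupp.deriv
  -- the integrand g
  set g : ℝ → ℝ := fun p => F' p * ψ p with hgdef
  have hgcont : Continuous g := hF'cont.mul hψcont
  have hgsupp : HasCompactSupport g := hF'supp.mul_right
  have hgint : Integrable g := hgcont.integrable_of_hasCompactSupport hgsupp
  have hintg_eq : (fun p => (ν ^ 2 * deriv (deriv v) p
      + deriv (fun q => (deriv H q - σ) * v q) p) * ψ p) = g := by
    funext p
    rw [hgdef]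
    simp only [hF'def, (hprod p).deriv]
  rw [hintg_eq]
  -- split the integral
  have hsplit : (∫ p : ℝ, g p)
      = (∫ p in Iic P₀, g p) + ((∫ p in Ioc P₀ P₁, g p) + ∫ p in Ioi P₁, g p) := by
    rw [← integral_Iic_add_Ioi (b := P₀) hgint.integrableOn hgint.integrableOn]
    congr 1
    rw [← Set.Ioc_union_Ioi_eq_Ioi hP.le,
      setIntegral_union (Set.Ioc_disjoint_Ioi le_rfl) measurableSet_Ioi
        hgint.integrableOn hgint.integrableOn]
  -- piece 1
  have h1 : (∫ p in Iic P₀, g p) = 0 := by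
    rw [setIntegral_congr_fun measurableSet_Iic (g := fun _ => (0:ℝ))
      (fun x hx => by simp [hgdef, hψ₀ x hx])]
    simp
  -- piece 3
  have h3 : (∫ p in Ioi P₁, g p) = 0 - F P₁ := by
    rw [setIntegral_congr_fun measurableSet_Ioi (g := F')
      (fun x hx => by simp [hgdef, hψ₁ x (le_of_lt hx)])]
    apply integral_Ioi_of_hasDerivAt_of_tendsto hFcont.continuousWithinAt
      (fun x _ => hF x) (hF'cont.integrable_of_hasCompactSupport hF'supp).integrableOn
    exact hFsupp.is_zero_at_infty.mono_left (le_sup_right.trans atBot_atTop_le_cocompact)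
  -- piece 2
  set G : ℝ → ℝ := fun p => F p * ψ p - ν ^ 2 / η * (v p * δ p) with hGdef
  have hGd : ∀ p ∈ Ioo P₀ P₁, HasDerivAt G (g p) p := by
    intro p hp
    have hmem : Ioo P₀ P₁ ∈ nhds p := isOpen_Ioo.mem_nhds hp
    have hψΦ' : ψ =ᶠ[nhds p] Φ := by
      filter_upwards [hmem] with x hx
      rw [hψmid x hx.1.le hx.2.le]
    have hψd : HasDerivAt ψ (η⁻¹ * δ p) p := (hΦd p).congr_of_eventuallyEq hψΦ'
    have hh1 : HasDerivAt (fun q => F q * ψ q) (F' p * ψ p + F p * (η⁻¹ * δ p)) p :=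
      (hF p).mul hψd
    have hh2 : HasDerivAt (fun q => v q * δ q)
        (deriv v p * δ p + v p * ((deriv H p - σ) / ν ^ 2 * δ p)) p :=
      (hv1 p).hasDerivAt.mul (hδd p)
    have hh3 := hh1.sub (hh2.const_mul (ν ^ 2 / η))
    have heq : F' p * ψ p + F p * (η⁻¹ * δ p)
        - ν ^ 2 / η * (deriv v p * δ p + v p * ((deriv H p - σ) / ν ^ 2 * δ p)) = g p := by
      simp only [hgdef, hFdef]
      field_simp
      ring
    rw [← heq]
    exact hh3
  have h2 : (∫ p in Ioc P₀ P₁, g p) = G P₁ - G P₀ := by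
    rw [← intervalIntegral.integral_of_le hP.le]
    exact integral_eq_sub_of_hasDerivAt_of_le hP.le
      (((hFcont.mul hψcont).sub
        (continuous_const.mul (hv1.continuous.mul hδcont))).continuousOn)
      hGd (hgcont.intervalIntegrable _ _)
  rw [hsplit, h1, h2, h3]
  have hψP₁ : ψ P₁ = 1 := hψ₁ _ le_rfl
  have hψP₀ : ψ P₀ = 0 := hψ₀ _ le_rfl
  have hγ0 : γ P₀ ≠ 0 := (hγpos P₀).ne'
  have hγ1 : γ P₁ ≠ 0 := (hγpos P₁).ne'
  simp only [hGdef, hψP₀, hψP₁, hαm, hαp, hδdef]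
  field_simp
  ring
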